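/- Let (c_k)_{k≥1} be i.i.d. strictly positive random variables with lim_{t→∞} log ℙ(c_1 > t)/log t = −α for some α ∈ (0, ∞), and let δ > 0. Then the random series W := Σ_{k≥1} e^{−2δk} c_k converges ℙ-almost surely, and lim_{t→∞} log ℙ(W > t)/log t = −α. -/

import Mathlib

open MeasureTheory Filter ProbabilityTheory


lemma aux_tendsto_of_abs_sub_le {f : ℝ → ℝ} {L : ℝ}
    (h : ∀ ε > 0, ∀ᶠ t in atTop, |f t - L| ≤ ε) : Tendsto f atTop (nhds L) := by
  rw [Metric.tendsto_atTop]
  intro ε hε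
  obtain ⟨N, hN⟩ := eventually_atTop.1 (h (ε / 2) (by positivity))
  exact ⟨N, fun n hn => lt_of_le_of_lt (by simpa [Real.dist_eq] using hN n hn) (by linarith)⟩

lemma aux_summable_of_eventually_le {f g : ℕ → ℝ} (hf : ∀ k, 0 ≤ f k)
    (h : ∀ᶠ k in atTop, f k ≤ g k) (hg : Summable g) : Summable f := by
  obtain ⟨N, hN⟩ := eventually_atTop.1 h
  have h1 : Summable (fun k => f (k + N)) :=
    ((summable_nat_add_iff N).2 hg).of_nonneg_of_le (fun k => hf _)
      (fun k => hN _ (Nat.le_add_left N k))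
  exact (summable_nat_add_iff N).1 h1

/-- geometric-type summability -/
lemma aux_summable_exp (a : ℝ) (ha : 0 < a) :
    Summable (fun k : ℕ => Real.exp (-a * (k + 1))) := by
  have h : Summable (fun k : ℕ => Real.exp ((k : ℝ) * (-a))) :=
    Real.summable_exp_nat_mul_iff.2 (by linarith)
  have := (summable_nat_add_iff 1).2 h
  apply this.congr
  intro k
  push_cast
  ring_nf

lemma aux_tail_pos {Q : ℝ → ℝ} {α : ℝ} (hα : 0 < α) (hQ : ∀ s, 0 ≤ Q s)
    (h : Tendsto (fun s => Real.log (Q s) / Real.log s) atTop (nhds (-α))) :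
    ∀ᶠ s in atTop, 0 < Q s := by
  have h1 : ∀ᶠ s in atTop, Real.log (Q s) / Real.log s < -(α / 2) :=
    h.eventually_lt_const (by linarith)
  filter_upwards [h1, eventually_ge_atTop (Real.exp 1)] with s hs hs1
  have hlogs : 0 < Real.log s := by
    have := Real.log_le_log (Real.exp_pos 1) hs1
    rw [Real.log_exp] at this; linarith
  have hlq : Real.log (Q s) < 0 := by
    have := (div_lt_iff₀ hlogs).1 hs
    nlinarith
  rcases lt_or_eq_of_le (hQ s) with h' | h'
  · exact h'
  · exfalso; rw [← h', Real.log_zero] at hlq; exact lt_irrefl 0 hlq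

lemma aux_tail_ub {Q : ℝ → ℝ} {α : ℝ} (hα : 0 < α) (hQ : ∀ s, 0 ≤ Q s)
    (h : Tendsto (fun s => Real.log (Q s) / Real.log s) atTop (nhds (-α)))
    {ε : ℝ} (hε : 0 < ε) :
    ∀ᶠ s in atTop, Q s ≤ s ^ (-(α - ε)) := by
  have h1 : ∀ᶠ s in atTop, Real.log (Q s) / Real.log s < -(α - ε) :=
    h.eventually_lt_const (by linarith)
  filter_upwards [h1, eventually_ge_atTop (Real.exp 1)] with s hs hs1
  have hspos : 0 < s := lt_of_lt_of_le (Real.exp_pos 1) hs1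
  have hlogs : 0 < Real.log s := by
    have := Real.log_le_log (Real.exp_pos 1) hs1
    rw [Real.log_exp] at this; linarith
  rcases lt_or_eq_of_le (hQ s) with h' | h'
  · have hlq : Real.log (Q s) ≤ -(α - ε) * Real.log s := by
      have := (div_lt_iff₀ hlogs).1 hs
      linarith
    calc Q s = Real.exp (Real.log (Q s)) := (Real.exp_log h').symm
      _ ≤ Real.exp (-(α - ε) * Real.log s) := Real.exp_le_exp.2 hlq
      _ = s ^ (-(α - ε)) := by rw [Real.rpow_def_of_pos hspos, mul_comm]
  · rw [← h']; positivity

lemma aux_tail_lb {Q : ℝ → ℝ} {α : ℝ} (hα : 0 < α) (hQ : ∀ s, 0 ≤ Q s)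
    (h : Tendsto (fun s => Real.log (Q s) / Real.log s) atTop (nhds (-α)))
    {ε : ℝ} (hε : 0 < ε) :
    ∀ᶠ s in atTop, s ^ (-(α + ε)) ≤ Q s := by
  have h1 : ∀ᶠ s in atTop, -(α + ε) < Real.log (Q s) / Real.log s :=
    h.eventually_const_lt (by linarith)
  filter_upwards [h1, aux_tail_pos hα hQ h, eventually_ge_atTop (Real.exp 1)]
    with s hs hQs hs1
  have hspos : 0 < s := lt_of_lt_of_le (Real.exp_pos 1) hs1
  have hlogs : 0 < Real.log s := by
    have := Real.log_le_log (Real.exp_pos 1) hs1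
    rw [Real.log_exp] at this; linarith
  have hlq : -(α + ε) * Real.log s ≤ Real.log (Q s) := by
    have := (lt_div_iff₀ hlogs).1 hs
    linarith
  calc s ^ (-(α + ε)) = Real.exp (-(α + ε) * Real.log s) := by rw [Real.rpow_def_of_pos hspos, mul_comm]
    _ ≤ Real.exp (Real.log (Q s)) := Real.exp_le_exp.2 hlq
    _ = Q s := Real.exp_log hQs

lemma aux_as_summable
    {Ω : Type*} [MeasurableSpace Ω] (P : Measure Ω) [IsProbabilityMeasure P]
    (c : ℕ → Ω → ℝ) (hpos : ∀ k ω, 0 < c k ω)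
    (hident : ∀ k, IdentDistrib (c k) (c 1) P P)
    {α : ℝ} (hα : 0 < α)
    (htail : ∀ᶠ s : ℝ in atTop,
      (P {ω | c 1 ω > s}).toReal ≤ s ^ (-(α - α/2)))
    (δ : ℝ) (hδ : 0 < δ) :
    ∀ᵐ ω ∂P, Summable (fun k : ℕ => Real.exp (-2 * δ * (k + 1)) * c (k + 1) ω) := by
  set β : ℝ := α - α / 2 with hβdef
  have hβ : 0 < β := by simp [hβdef]; linarith
  have hid : ∀ (k : ℕ) (s : ℝ), P {ω | c k ω > s} = P {ω | c 1 ω > s} := by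
    intro k s
    have := (hident k).measure_mem_eq (measurableSet_Ioi (a := s))
    simpa [Set.preimage] using this
  set E : ℕ → Set Ω := fun k => {ω | c (k + 1) ω > Real.exp (δ * (k + 1))} with hEdef
  obtain ⟨s₀, hs₀⟩ := eventually_atTop.1 htail
  -- eventually in k the bound holds
  have htend : Tendsto (fun k : ℕ => Real.exp (δ * (k + 1))) atTop atTop := by
    apply Real.tendsto_exp_atTop.comp
    apply Tendsto.const_mul_atTop hδ
    exact tendsto_atTop_add_const_right _ 1 tendsto_natCast_atTop_atTop
  have hkev : ∀ᶠ k : ℕ in atTop,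
      P (E k) ≤ ENNReal.ofReal (Real.exp (-(β * δ) * (k + 1))) := by
    filter_upwards [htend.eventually_ge_atTop s₀] with k hk
    have h1 : P (E k) = ENNReal.ofReal ((P {ω | c 1 ω > Real.exp (δ * (k + 1))}).toReal) := by
      rw [hEdef]; simp only []
      rw [hid (k + 1) (Real.exp (δ * (k + 1)))]
      · push_cast
        rw [ENNReal.ofReal_toReal (measure_ne_top _ _)]
    rw [h1]
    apply ENNReal.ofReal_le_ofReal
    refine (hs₀ _ hk).trans ?_
    rw [Real.rpow_def_of_pos (Real.exp_pos _), Real.log_exp]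
    apply le_of_eq
    congr 1
    ring
  obtain ⟨N, hN⟩ := eventually_atTop.1 hkev
  set C : ℝ := Real.exp (β * δ * (N + 1)) with hCdef
  have hboundall : ∀ k, P (E k) ≤ ENNReal.ofReal (C * Real.exp (-(β * δ) * (k + 1))) := by
    intro k
    by_cases hk : N ≤ k
    · refine (hN k hk).trans (ENNReal.ofReal_le_ofReal ?_)
      apply le_mul_of_one_le_left (Real.exp_nonneg _)
      rw [hCdef]
      apply Real.one_le_exp
      positivity
    · push_neg at hk
      calc P (E k) ≤ 1 := prob_le_one
        _ ≤ ENNReal.ofReal (C * Real.exp (-(β * δ) * (k + 1))) := by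
            rw [← ENNReal.ofReal_one]
            apply ENNReal.ofReal_le_ofReal
            rw [hCdef, ← Real.exp_add]
            apply Real.one_le_exp
            have : (k : ℝ) ≤ (N : ℝ) := Nat.cast_le.2 hk.le
            nlinarith [mul_pos hβ hδ]
  have hgsum : Summable (fun k : ℕ => C * Real.exp (-(β * δ) * (k + 1))) :=
    (aux_summable_exp (β * δ) (by positivity)).mul_left C
  have hsum : (∑' k, P (E k)) ≠ ⊤ := by
    apply ne_top_of_le_ne_top _ (ENNReal.tsum_le_tsum hboundall)
    rw [← ENNReal.ofReal_tsum_of_nonneg (fun k => by positivity) hgsum]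
    exact ENNReal.ofReal_ne_top
  filter_upwards [ae_eventually_notMem hsum] with ω hω
  apply aux_summable_of_eventually_le
    (g := fun k : ℕ => Real.exp (-δ * (k + 1)))
  · intro k
    exact mul_nonneg (Real.exp_nonneg _) (hpos _ ω).le
  · filter_upwards [hω] with k hk
    rw [hEdef] at hk
    simp only [Set.mem_setOf_eq, not_lt] at hk
    calc Real.exp (-2 * δ * (k + 1)) * c (k + 1) ω
        ≤ Real.exp (-2 * δ * (k + 1)) * Real.exp (δ * (k + 1)) :=
          mul_le_mul_of_nonneg_left hk (Real.exp_nonneg _)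
      _ = Real.exp (-δ * (k + 1)) := by rw [← Real.exp_add]; congr 1; ring
  · exact aux_summable_exp δ hδ

/-- **Tail of the geometric sum of heavy-tailed conductances (BiRC, Lemma on `X`).**
Let `(c_k)_{k≥1}` be i.i.d. strictly positive random variables with
`lim_{t→∞} log P(c₁ > t)/log t = -α`, `α ∈ (0,∞)`, and let `δ > 0`. Then the series
`W := Σ_{k≥1} e^{-2δk} c_k` converges `P`-a.s. and
`lim_{t→∞} log P(W > t)/log t = -α`. -/
theorem tail_of_geometric_sum
    {Ω : Type*} [MeasurableSpace Ω] (P : Measure Ω) [IsProbabilityMeasure P]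
    (c : ℕ → Ω → ℝ) (hmeas : ∀ k, Measurable (c k))
    (hpos : ∀ k ω, 0 < c k ω)
    (hindep : iIndepFun c P)
    (hident : ∀ k, IdentDistrib (c k) (c 1) P P)
    (α : ℝ) (hα : 0 < α)
    (htail : Tendsto (fun t : ℝ => Real.log (P {ω | c 1 ω > t}).toReal / Real.log t)
      atTop (nhds (-α)))
    (δ : ℝ) (hδ : 0 < δ) :
    (∀ᵐ ω ∂P, Summable (fun k : ℕ => Real.exp (-2 * δ * (k + 1)) * c (k + 1) ω)) ∧
    Tendsto
      (fun t : ℝ =>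
        Real.log
          (P {ω | (∑' k : ℕ, Real.exp (-2 * δ * (k + 1)) * c (k + 1) ω) > t}).toReal
          / Real.log t)
      atTop (nhds (-α)) := by
  set Q : ℝ → ℝ := fun s => (P {ω | c 1 ω > s}).toReal with hQdef
  have hQ : ∀ s, 0 ≤ Q s := fun s => ENNReal.toReal_nonneg
  have hid : ∀ (k : ℕ) (s : ℝ), P {ω | c k ω > s} = P {ω | c 1 ω > s} := by
    intro k s
    have := (hident k).measure_mem_eq (measurableSet_Ioi (a := s))
    simpa [Set.preimage] using this
  have hpart1 : ∀ᵐ ω ∂P,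
      Summable (fun k : ℕ => Real.exp (-2 * δ * (k + 1)) * c (k + 1) ω) := by
    apply aux_as_summable P c hpos hident hα _ δ hδ
    exact aux_tail_ub hα hQ htail (by positivity)
  refine ⟨hpart1, ?_⟩
  set W : Ω → ℝ := fun ω => ∑' k : ℕ, Real.exp (-2 * δ * (k + 1)) * c (k + 1) ω with hWdef
  set p : ℝ → ℝ := fun t => (P {ω | W ω > t}).toReal with hpdef
  have hA : P {ω | ¬ Summable (fun k : ℕ => Real.exp (-2 * δ * (k + 1)) * c (k + 1) ω)} = 0 :=
    ae_iff.mp hpart1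
  apply aux_tendsto_of_abs_sub_le
  intro ε' hε'
  set ε : ℝ := min (ε' / 4) (α / 2) with hεdef
  have hε : 0 < ε := lt_min (by linarith) (by linarith)
  have hε1 : ε ≤ ε' / 4 := min_le_left _ _
  have hε2 : ε ≤ α / 2 := min_le_right _ _
  -- LOWER BOUND
  have hLB : ∀ᶠ t : ℝ in atTop, t ^ (-(α + 2 * ε)) ≤ p t := by
    have hcomp : Tendsto (fun t : ℝ => t * Real.exp (2 * δ)) atTop atTop :=
      Tendsto.atTop_mul_const (Real.exp_pos _) tendsto_id
    have h1 := hcomp.eventually (aux_tail_lb hα hQ htail hε)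
    have h2 : ∀ᶠ t : ℝ in atTop, t ^ (-ε) < Real.exp (2 * δ * (-(α + ε))) :=
      (tendsto_rpow_neg_atTop hε).eventually_lt_const (Real.exp_pos _)
    filter_upwards [h1, h2, eventually_gt_atTop 1] with t h1 h2 ht1
    have ht : (0 : ℝ) < t := by linarith
    -- measure inclusion
    have hQle : Q (t * Real.exp (2 * δ)) ≤ p t := by
      have hsub : {ω | c 1 ω > t * Real.exp (2 * δ)} ∩
          {ω | Summable (fun k : ℕ => Real.exp (-2 * δ * (k + 1)) * c (k + 1) ω)}
          ⊆ {ω | W ω > t} := by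
        rintro ω ⟨h₁, h₂⟩
        simp only [Set.mem_setOf_eq] at h₁ h₂ ⊢
        have hle : Real.exp (-2 * δ * ((0 : ℕ) + 1)) * c (0 + 1) ω ≤ W ω :=
          Summable.le_tsum h₂ 0 (fun j _ => mul_nonneg (Real.exp_nonneg _) (hpos _ ω).le)
        have h3 : Real.exp (-2 * δ) * c 1 ω ≤ W ω := by
          simpa using hle
        have h4 : Real.exp (-2 * δ) * (t * Real.exp (2 * δ)) < Real.exp (-2 * δ) * c 1 ω :=
          mul_lt_mul_of_pos_left h₁ (Real.exp_pos _)
        have h5 : Real.exp (-2 * δ) * (t * Real.exp (2 * δ)) = t := by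
          rw [mul_comm t, ← mul_assoc, ← Real.exp_add]
          simp
        linarith
      have hm : P {ω | c 1 ω > t * Real.exp (2 * δ)} ≤ P {ω | W ω > t} := by
        calc P {ω | c 1 ω > t * Real.exp (2 * δ)}
            ≤ P (({ω | c 1 ω > t * Real.exp (2 * δ)} ∩
                {ω | Summable (fun k : ℕ => Real.exp (-2 * δ * (k + 1)) * c (k + 1) ω)}) ∪
                {ω | ¬ Summable (fun k : ℕ => Real.exp (-2 * δ * (k + 1)) * c (k + 1) ω)}) := by
              apply measure_mono
              intro ω hω
              by_cases hs : Summable (fun k : ℕ => Real.exp (-2 * δ * (k + 1)) * c (k + 1) ω)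
              · exact Or.inl ⟨hω, hs⟩
              · exact Or.inr hs
          _ ≤ P ({ω | c 1 ω > t * Real.exp (2 * δ)} ∩
                {ω | Summable (fun k : ℕ => Real.exp (-2 * δ * (k + 1)) * c (k + 1) ω)}) +
              P {ω | ¬ Summable (fun k : ℕ => Real.exp (-2 * δ * (k + 1)) * c (k + 1) ω)} :=
              measure_union_le _ _
          _ = P ({ω | c 1 ω > t * Real.exp (2 * δ)} ∩
                {ω | Summable (fun k : ℕ => Real.exp (-2 * δ * (k + 1)) * c (k + 1) ω)}) := by
              rw [hA, add_zero]
          _ ≤ P {ω | W ω > t} := measure_mono hsub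
      exact ENNReal.toReal_mono (measure_ne_top _ _) hm
    refine le_trans ?_ (le_trans h1 hQle)
    have he1 : (t * Real.exp (2 * δ)) ^ (-(α + ε))
        = t ^ (-(α + ε)) * Real.exp (2 * δ * (-(α + ε))) := by
      rw [Real.mul_rpow ht.le (Real.exp_nonneg _),
        Real.rpow_def_of_pos (Real.exp_pos _), Real.log_exp]
    have he2 : t ^ (-(α + 2 * ε)) = t ^ (-(α + ε)) * t ^ (-ε) := by
      rw [← Real.rpow_add ht]; congr 1; ring
    rw [he1, he2]
    exact mul_le_mul_of_nonneg_left h2.le (Real.rpow_nonneg ht.le _)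
  -- UPPER BOUND
  have hUB : ∀ᶠ t : ℝ in atTop, p t ≤ t ^ (-(α - 2 * ε)) := by
    set β : ℝ := α - ε with hβdef
    have hβ : 0 < β := by rw [hβdef]; linarith
    obtain ⟨s₀, hs₀⟩ := eventually_atTop.1 (aux_tail_ub hα hQ htail hε)
    set θ : ℝ := 1 - Real.exp (-δ) with hθdef
    have hr1 : Real.exp (-δ) < 1 := Real.exp_lt_one_iff.2 (by linarith)
    have hθ : 0 < θ := by rw [hθdef]; linarith
    set S : ℝ := ∑' k : ℕ, Real.exp (-(δ * β) * (k + 1)) with hSdef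
    have hSsum : Summable (fun k : ℕ => Real.exp (-(δ * β) * (k + 1))) :=
      aux_summable_exp _ (by positivity)
    have hub2 : ∀ᶠ t : ℝ in atTop, p t ≤ t ^ (-β) * (θ ^ (-β) * S) := by
      filter_upwards [eventually_ge_atTop (s₀ / (θ * Real.exp δ)), eventually_gt_atTop 0]
        with t hts ht
      have hsk : ∀ k : ℕ, s₀ ≤ t * θ * Real.exp (δ * (k + 1)) := by
        intro k
        have h1 : s₀ ≤ t * (θ * Real.exp δ) := by
          rw [div_le_iff₀ (by positivity)] at hts; linarith
        have h2 : Real.exp δ ≤ Real.exp (δ * (k + 1)) := by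
          apply Real.exp_le_exp.2; nlinarith [Nat.cast_nonneg (α := ℝ) k]
        calc s₀ ≤ t * (θ * Real.exp δ) := h1
          _ = t * θ * Real.exp δ := by ring
          _ ≤ t * θ * Real.exp (δ * (k + 1)) :=
              mul_le_mul_of_nonneg_left h2 (by positivity)
      have hsub : {ω | W ω > t} ⊆
          ⋃ k : ℕ, {ω | c (k + 1) ω > t * θ * Real.exp (δ * (k + 1))} := by
        intro ω hω
        by_contra hnot
        simp only [Set.mem_iUnion, Set.mem_setOf_eq, not_exists, not_lt] at hnot
        have hterm : ∀ k : ℕ, Real.exp (-2 * δ * (k + 1)) * c (k + 1) ω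
            ≤ t * θ * Real.exp (-δ * (k + 1)) := by
          intro k
          calc Real.exp (-2 * δ * (k + 1)) * c (k + 1) ω
              ≤ Real.exp (-2 * δ * (k + 1)) * (t * θ * Real.exp (δ * (k + 1))) :=
                mul_le_mul_of_nonneg_left (hnot k) (Real.exp_nonneg _)
            _ = t * θ * (Real.exp (-2 * δ * (k + 1)) * Real.exp (δ * (k + 1))) := by ring
            _ = t * θ * Real.exp (-δ * (k + 1)) := by
                rw [← Real.exp_add]; congr 2; ring
        have hG : Summable (fun k : ℕ => t * θ * Real.exp (-δ * (k + 1))) :=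
          (aux_summable_exp δ hδ).mul_left _
        have hF : Summable (fun k : ℕ => Real.exp (-2 * δ * (k + 1)) * c (k + 1) ω) :=
          hG.of_nonneg_of_le (fun k => mul_nonneg (Real.exp_nonneg _) (hpos _ ω).le) hterm
        have hWle : W ω ≤ ∑' k : ℕ, t * θ * Real.exp (-δ * (k + 1)) :=
          Summable.tsum_le_tsum hterm hF hG
        have hgeo : ∑' k : ℕ, Real.exp (-δ * (k + 1))
            = Real.exp (-δ) * (1 - Real.exp (-δ))⁻¹ := by
          have h1 : ∀ k : ℕ, Real.exp (-δ * ((k : ℝ) + 1))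
              = Real.exp (-δ) * Real.exp (-δ) ^ k := by
            intro k
            rw [← Real.exp_nat_mul, ← Real.exp_add]
            congr 1; ring
          rw [tsum_congr h1, tsum_mul_left,
            tsum_geometric_of_lt_one (Real.exp_nonneg _) hr1]
        have hWle2 : W ω ≤ t * Real.exp (-δ) := by
          rw [tsum_mul_left, hgeo] at hWle
          have hne : (1 : ℝ) - Real.exp (-δ) ≠ 0 := by linarith
          calc W ω ≤ t * θ * (Real.exp (-δ) * (1 - Real.exp (-δ))⁻¹) := hWle
            _ = t * Real.exp (-δ) := by rw [hθdef]; field_simp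
        simp only [Set.mem_setOf_eq] at hω
        nlinarith [Real.exp_pos (-δ)]
      have hmeasle : P {ω | W ω > t} ≤ ENNReal.ofReal ((t * θ) ^ (-β) * S) := by
        calc P {ω | W ω > t}
            ≤ ∑' k : ℕ, P {ω | c (k + 1) ω > t * θ * Real.exp (δ * (k + 1))} :=
              (measure_mono hsub).trans (measure_iUnion_le _)
          _ ≤ ∑' k : ℕ, ENNReal.ofReal ((t * θ) ^ (-β) * Real.exp (-(δ * β) * (k + 1))) := by
              apply ENNReal.tsum_le_tsum
              intro k
              rw [hid (k + 1)]
              rw [← ENNReal.ofReal_toReal (measure_ne_top P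
                {ω | c 1 ω > t * θ * Real.exp (δ * (k + 1))})]
              apply ENNReal.ofReal_le_ofReal
              refine (hs₀ _ (hsk k)).trans ?_
              rw [Real.mul_rpow (by positivity) (Real.exp_nonneg _),
                Real.rpow_def_of_pos (Real.exp_pos _), Real.log_exp]
              apply le_of_eq
              congr 1
              rw [hβdef]; ring
          _ = ENNReal.ofReal ((t * θ) ^ (-β) * S) := by
              rw [← ENNReal.ofReal_tsum_of_nonneg (fun k => by positivity)
                (hSsum.mul_left _), tsum_mul_left]
      have := ENNReal.toReal_mono ENNReal.ofReal_ne_top hmeasle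
      have hS0 : 0 ≤ S := tsum_nonneg (fun k => Real.exp_nonneg _)
      rw [ENNReal.toReal_ofReal (mul_nonneg (Real.rpow_nonneg (by positivity) _) hS0)] at this
      refine this.trans (le_of_eq ?_)
      rw [Real.mul_rpow ht.le hθ.le]; ring
    have hC : ∀ᶠ t : ℝ in atTop, θ ^ (-β) * S ≤ t ^ ε :=
      (tendsto_rpow_atTop hε).eventually_ge_atTop _
    filter_upwards [hub2, hC, eventually_gt_atTop 1] with t hub2 hC ht1
    have ht : (0 : ℝ) < t := by linarith
    have he : t ^ (-(α - 2 * ε)) = t ^ (-β) * t ^ ε := by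
      rw [← Real.rpow_add ht, hβdef]; congr 1; ring
    rw [he]
    exact hub2.trans (mul_le_mul_of_nonneg_left hC (Real.rpow_nonneg ht.le _))
  -- COMBINE
  filter_upwards [hLB, hUB, eventually_gt_atTop 1] with t hl hu ht1
  have ht : (0 : ℝ) < t := by linarith
  have hlogt : 0 < Real.log t := Real.log_pos ht1
  have hp0 : 0 < p t := lt_of_lt_of_le (Real.rpow_pos_of_pos ht _) hl
  have h1 : Real.log (p t) ≤ -(α - 2 * ε) * Real.log t := by
    have := Real.log_le_log hp0 hu
    rwa [Real.log_rpow ht] at this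
  have h2 : -(α + 2 * ε) * Real.log t ≤ Real.log (p t) := by
    have := Real.log_le_log (Real.rpow_pos_of_pos ht _) hl
    rwa [Real.log_rpow ht] at this
  have hq1 : Real.log (p t) / Real.log t ≤ -(α - 2 * ε) :=
    (div_le_iff₀ hlogt).2 h1
  have hq2 : -(α + 2 * ε) ≤ Real.log (p t) / Real.log t :=
    (le_div_iff₀ hlogt).2 h2
  rw [abs_le]
  constructor <;> [linarith; linarith]
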